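/- Let P be a poset with legs and let F ⊆ 2^{[n]} be an induced P-saturated family. Then there is an injective function f: [n] → F \ {∅} such that f(i) = {i} whenever {i} ∈ F, and otherwise f(i) is the hip of some induced copy of P in F ∪ {{i}}. -/
import Mathlib


/-- `φ` is an induced-copy map of the poset `P` into the family `F`
(posets are finite collections of finite subsets of `ℕ`, ordered by inclusion). -/
def IsCopyMap (P F : Finset (Finset ℕ)) (φ : Finset ℕ → Finset ℕ) : Prop :=
  Set.InjOn φ ↑P ∧ (∀ A ∈ P, φ A ∈ F) ∧ ∀ A ∈ P, ∀ B ∈ P, (φ A ⊆ φ B ↔ A ⊆ B)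

/-- `F` contains an induced copy of the poset `P`. -/
def ContainsInduced (P F : Finset (Finset ℕ)) : Prop := ∃ φ, IsCopyMap P F φ

/-- `F ⊆ 2^[n]` is induced `P`-saturated. -/
def InducedSaturated (n : ℕ) (P F : Finset (Finset ℕ)) : Prop :=
  (∀ A ∈ F, A ⊆ Finset.Icc 1 n) ∧ ¬ ContainsInduced P F ∧
  ∀ S ⊆ Finset.Icc 1 n, S ∉ F → ContainsInduced P (insert S F)

/-- `P` has legs `L1, L2` and hip `H`. -/
def LegsAt (P : Finset (Finset ℕ)) (L1 L2 H : Finset ℕ) : Prop :=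
  L1 ∈ P ∧ L2 ∈ P ∧ H ∈ P ∧ L1 ≠ L2 ∧ L1 ≠ H ∧ L2 ≠ H ∧
  ¬ L1 ⊆ L2 ∧ ¬ L2 ⊆ L1 ∧ L1 ⊆ H ∧ L2 ⊆ H ∧
  ∀ A ∈ P, A ≠ L1 → A ≠ L2 → A ≠ H → H ⊆ A

/-- `P` has legs. -/
def HasLegs (P : Finset (Finset ℕ)) : Prop := ∃ L1 L2 H, LegsAt P L1 L2 H

/-- `sat*(n, P)`: the minimum size of an induced `P`-saturated family in `2^[n]`. -/
noncomputable def satStar (n : ℕ) (P : Finset (Finset ℕ)) : ℕ :=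
  sInf {k | ∃ F : Finset (Finset ℕ), InducedSaturated n P F ∧ F.card = k}

/-- There is a copy of `P` whose hip is `X` and whose "tops" (non-leg, non-hip
elements) all land in `F`. -/
def TopsFam (P : Finset (Finset ℕ)) (L1 L2 H : Finset ℕ) (F : Finset (Finset ℕ))
    (X : Finset ℕ) : Prop :=
  ∃ φ : Finset ℕ → Finset ℕ, Set.InjOn φ ↑P ∧
    (∀ A ∈ P, ∀ B ∈ P, (φ A ⊆ φ B ↔ A ⊆ B)) ∧ φ H = X ∧
    ∀ C ∈ P, C ≠ L1 → C ≠ L2 → C ≠ H → φ C ∈ F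

theorem chi {P : Finset (Finset ℕ)} {L1 L2 H : Finset ℕ} (hlegs : LegsAt P L1 L2 H)
    {F : Finset (Finset ℕ)} {X : Finset ℕ} (hT : TopsFam P L1 L2 H F X)
    {G : Finset (Finset ℕ)} (hFG : ∀ Y ∈ F, Y ∈ G)
    {u v x : Finset ℕ} (hu : u ∈ G) (hv : v ∈ G) (hx : x ∈ G)
    (huv : ¬ u ⊆ v) (hvu : ¬ v ⊆ u) (hux : u ⊆ x) (hvx : v ⊆ x)
    (hune : u ≠ x) (hvne : v ≠ x) (hxX : x ⊆ X) :
    ∃ χ, IsCopyMap P G χ ∧ χ H = x := by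
  obtain ⟨h1P, h2P, hHP, h12ne, h1H, h2H, h12, h21, h1sH, h2sH, hmin⟩ := hlegs
  obtain ⟨φ, hinj, hiff, hφH, htops⟩ := hT
  classical
  set χ : Finset ℕ → Finset ℕ :=
    fun A => if A = L1 then u else if A = L2 then v else if A = H then x else φ A with hχdef
  have hχ1 : χ L1 = u := by simp [hχdef]
  have hχ2 : χ L2 = v := by simp [hχdef, Ne.symm h12ne]
  have hχH : χ H = x := by simp [hχdef, Ne.symm h1H, Ne.symm h2H]
  have hχC : ∀ C, C ≠ L1 → C ≠ L2 → C ≠ H → χ C = φ C := by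
    intro C a b c; simp [hχdef, a, b, c]
  have hXφC : ∀ C ∈ P, C ≠ L1 → C ≠ L2 → C ≠ H → X ⊆ φ C := by
    intro C hC a b c
    have := (hiff H hHP C hC).mpr (hmin C hC a b c)
    rwa [hφH] at this
  have hxφC : ∀ C ∈ P, C ≠ L1 → C ≠ L2 → C ≠ H → x ⊆ φ C :=
    fun C hC a b c => hxX.trans (hXφC C hC a b c)
  have hnotφCx : ∀ C ∈ P, C ≠ L1 → C ≠ L2 → C ≠ H → ¬ φ C ⊆ x := by
    intro C hC a b c h
    have hCH : C ⊆ H := (hiff C hC H hHP).mp (by rw [hφH]; exact h.trans hxX)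
    exact c (Finset.Subset.antisymm hCH (hmin C hC a b c))
  have notH1 : ¬ H ⊆ L1 := fun h => h1H (Finset.Subset.antisymm h1sH h)
  have notH2 : ¬ H ⊆ L2 := fun h => h2H (Finset.Subset.antisymm h2sH h)
  have notCH : ∀ C ∈ P, C ≠ L1 → C ≠ L2 → C ≠ H → ¬ C ⊆ H := by
    intro C hC a b c h
    exact c (Finset.Subset.antisymm h (hmin C hC a b c))
  have notCL1 : ∀ C ∈ P, C ≠ L1 → C ≠ L2 → C ≠ H → ¬ C ⊆ L1 :=
    fun C hC a b c h => notCH C hC a b c (h.trans h1sH)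
  have notCL2 : ∀ C ∈ P, C ≠ L1 → C ≠ L2 → C ≠ H → ¬ C ⊆ L2 :=
    fun C hC a b c h => notCH C hC a b c (h.trans h2sH)
  have hL1C : ∀ C ∈ P, C ≠ L1 → C ≠ L2 → C ≠ H → L1 ⊆ C :=
    fun C hC a b c => h1sH.trans (hmin C hC a b c)
  have hL2C : ∀ C ∈ P, C ≠ L1 → C ≠ L2 → C ≠ H → L2 ⊆ C :=
    fun C hC a b c => h2sH.trans (hmin C hC a b c)
  have notxu : ¬ x ⊆ u := fun h => hune (Finset.Subset.antisymm hux h)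
  have notxv : ¬ x ⊆ v := fun h => hvne (Finset.Subset.antisymm hvx h)
  have cases4 : ∀ A, A = L1 ∨ A = L2 ∨ A = H ∨ (A ≠ L1 ∧ A ≠ L2 ∧ A ≠ H) := by tauto
  refine ⟨χ, ⟨?_, ?_, ?_⟩, hχH⟩
  · -- InjOn
    intro A hA B hB hAB
    rw [Finset.mem_coe] at hA hB
    rcases cases4 A with rfl | rfl | rfl | ⟨a1, a2, a3⟩ <;>
      rcases cases4 B with rfl | rfl | rfl | ⟨b1, b2, b3⟩
    · rfl
    · rw [hχ1, hχ2] at hAB; exact absurd (hAB ▸ Finset.Subset.refl u) huv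
    · rw [hχ1, hχH] at hAB; exact absurd hAB hune
    · rw [hχ1, hχC B b1 b2 b3] at hAB
      exact absurd (hAB ▸ hux) (hnotφCx B hB b1 b2 b3)
    · rw [hχ2, hχ1] at hAB; exact absurd (hAB ▸ Finset.Subset.refl v) hvu
    · rfl
    · rw [hχ2, hχH] at hAB; exact absurd hAB hvne
    · rw [hχ2, hχC B b1 b2 b3] at hAB
      exact absurd (hAB ▸ hvx) (hnotφCx B hB b1 b2 b3)
    · rw [hχH, hχ1] at hAB; exact absurd hAB.symm hune
    · rw [hχH, hχ2] at hAB; exact absurd hAB.symm hvne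
    · rfl
    · rw [hχH, hχC B b1 b2 b3] at hAB
      exact absurd (hAB ▸ Finset.Subset.refl x) (hnotφCx B hB b1 b2 b3)
    · rw [hχ1, hχC A a1 a2 a3] at hAB
      exact absurd (hAB ▸ hux) (hnotφCx A hA a1 a2 a3)
    · rw [hχ2, hχC A a1 a2 a3] at hAB
      exact absurd (hAB ▸ hvx) (hnotφCx A hA a1 a2 a3)
    · rw [hχH, hχC A a1 a2 a3] at hAB
      exact absurd (hAB ▸ Finset.Subset.refl x) (hnotφCx A hA a1 a2 a3)
    · rw [hχC A a1 a2 a3, hχC B b1 b2 b3] at hAB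
      exact hinj (Finset.mem_coe.mpr hA) (Finset.mem_coe.mpr hB) hAB
  · -- membership
    intro A hA
    rcases cases4 A with rfl | rfl | rfl | ⟨a1, a2, a3⟩
    · rwa [hχ1]
    · rwa [hχ2]
    · rwa [hχH]
    · rw [hχC A a1 a2 a3]; exact hFG _ (htops A hA a1 a2 a3)
  · -- order iff
    intro A hA B hB
    rcases cases4 A with rfl | rfl | rfl | ⟨a1, a2, a3⟩ <;>
      rcases cases4 B with rfl | rfl | rfl | ⟨b1, b2, b3⟩
    · exact iff_of_true (Finset.Subset.refl _) (Finset.Subset.refl _)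
    · rw [hχ1, hχ2]; exact iff_of_false huv h12
    · rw [hχ1, hχH]; exact iff_of_true hux h1sH
    · rw [hχ1, hχC B b1 b2 b3]
      exact iff_of_true (hux.trans (hxφC B hB b1 b2 b3)) (hL1C B hB b1 b2 b3)
    · rw [hχ2, hχ1]; exact iff_of_false hvu h21
    · exact iff_of_true (Finset.Subset.refl _) (Finset.Subset.refl _)
    · rw [hχ2, hχH]; exact iff_of_true hvx h2sH
    · rw [hχ2, hχC B b1 b2 b3]
      exact iff_of_true (hvx.trans (hxφC B hB b1 b2 b3)) (hL2C B hB b1 b2 b3)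
    · rw [hχH, hχ1]; exact iff_of_false notxu notH1
    · rw [hχH, hχ2]; exact iff_of_false notxv notH2
    · exact iff_of_true (Finset.Subset.refl _) (Finset.Subset.refl _)
    · rw [hχH, hχC B b1 b2 b3]
      exact iff_of_true (hxφC B hB b1 b2 b3) (hmin B hB b1 b2 b3)
    · rw [hχ1, hχC A a1 a2 a3]
      refine iff_of_false (fun h => ?_) (notCL1 A hA a1 a2 a3)
      exact hnotφCx A hA a1 a2 a3 (h.trans hux)
    · rw [hχ2, hχC A a1 a2 a3]
      refine iff_of_false (fun h => ?_) (notCL2 A hA a1 a2 a3)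
      exact hnotφCx A hA a1 a2 a3 (h.trans hvx)
    · rw [hχH, hχC A a1 a2 a3]
      exact iff_of_false (hnotφCx A hA a1 a2 a3) (notCH A hA a1 a2 a3)
    · rw [hχC A a1 a2 a3, hχC B b1 b2 b3]; exact hiff A hA B hB

theorem chain_below {P : Finset (Finset ℕ)} {L1 L2 H : Finset ℕ} (hlegs : LegsAt P L1 L2 H)
    {F : Finset (Finset ℕ)} (hfree : ¬ ContainsInduced P F) {X Y Z : Finset ℕ}
    (hT : TopsFam P L1 L2 H F X) (hX : X ∈ F) (hY : Y ∈ F) (hZ : Z ∈ F)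
    (hYX : Y ⊆ X) (hYne : Y ≠ X) (hZX : Z ⊆ X) (hZne : Z ≠ X) : Y ⊆ Z ∨ Z ⊆ Y := by
  by_contra hcon
  push_neg at hcon
  obtain ⟨χ, hχ, -⟩ := chi hlegs hT (fun Y hY => hY) hY hZ hX hcon.1 hcon.2 hYX hZX hYne
    hZne (Finset.Subset.refl X)
  exact hfree ⟨χ, hχ⟩

theorem hip_tops {P : Finset (Finset ℕ)} {L1 L2 H : Finset ℕ} (hlegs : LegsAt P L1 L2 H)
    {F : Finset (Finset ℕ)} {i : ℕ} {φ : Finset ℕ → Finset ℕ}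
    (hφ : IsCopyMap P (insert ({i} : Finset ℕ) F) φ) :
    φ H ∈ F ∧ TopsFam P L1 L2 H F (φ H) := by
  obtain ⟨h1P, h2P, hHP, h12ne, h1H, h2H, h12, h21, h1sH, h2sH, hmin⟩ := hlegs
  obtain ⟨hinj, hmem, hiff⟩ := hφ
  have hnotsing : ∀ A ∈ P, H ⊆ A → φ A ≠ ({i} : Finset ℕ) := by
    intro A hA hHA h
    have l1 : φ L1 ⊆ {i} := h ▸ ((hiff _ h1P _ hA).mpr (h1sH.trans hHA))
    have l2 : φ L2 ⊆ {i} := h ▸ ((hiff _ h2P _ hA).mpr (h2sH.trans hHA))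
    rcases Finset.subset_singleton_iff.mp l1 with e | e
    · exact h12 ((hiff _ h1P _ h2P).mp (e ▸ Finset.empty_subset _))
    · exact h21 ((hiff _ h2P _ h1P).mp (by rw [e]; exact l2))
  refine ⟨?_, φ, hinj, hiff, rfl, fun C hC a b c =>
    (Finset.mem_insert.mp (hmem C hC)).resolve_left (hnotsing C hC (hmin C hC a b c))⟩
  exact (Finset.mem_insert.mp (hmem H hHP)).resolve_left (hnotsing H hHP (Finset.Subset.refl H))

theorem copy_uses {P F : Finset (Finset ℕ)} (hfree : ¬ ContainsInduced P F)
    {S : Finset ℕ} {φ : Finset ℕ → Finset ℕ} (hS : S ∉ F) (hφ : IsCopyMap P (insert S F) φ) :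
    ∃ A ∈ P, φ A = S := by
  by_contra h
  push_neg at h
  exact hfree ⟨φ, hφ.1,
    fun A hA => (Finset.mem_insert.mp (hφ.2.1 A hA)).resolve_left (h A hA), hφ.2.2⟩

theorem legs_below {P : Finset (Finset ℕ)} {L1 L2 H : Finset ℕ} (hlegs : LegsAt P L1 L2 H)
    {F : Finset (Finset ℕ)} {S : Finset ℕ} {φ : Finset ℕ → Finset ℕ}
    (hφ : IsCopyMap P (insert S F) φ) {A₀ : Finset ℕ} (hA₀ : A₀ ∈ P) (hρ : φ A₀ = S)
    (hHA : H ⊆ A₀) :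
    ∃ U V : Finset ℕ, U ∈ F ∧ V ∈ F ∧ ¬ U ⊆ V ∧ ¬ V ⊆ U ∧ U ⊆ S ∧ V ⊆ S := by
  obtain ⟨h1P, h2P, hHP, h12ne, h1H, h2H, h12, h21, h1sH, h2sH, hmin⟩ := hlegs
  obtain ⟨hinj, hmem, hiff⟩ := hφ
  have hUS : φ L1 ⊆ S := hρ ▸ ((hiff _ h1P _ hA₀).mpr (h1sH.trans hHA))
  have hVS : φ L2 ⊆ S := hρ ▸ ((hiff _ h2P _ hA₀).mpr (h2sH.trans hHA))
  have hU : φ L1 ∈ F := by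
    refine (Finset.mem_insert.mp (hmem _ h1P)).resolve_left fun e => ?_
    have : L1 = A₀ := hinj (Finset.mem_coe.mpr h1P) (Finset.mem_coe.mpr hA₀) (e.trans hρ.symm)
    exact h1H (Finset.Subset.antisymm h1sH (this ▸ hHA))
  have hV : φ L2 ∈ F := by
    refine (Finset.mem_insert.mp (hmem _ h2P)).resolve_left fun e => ?_
    have : L2 = A₀ := hinj (Finset.mem_coe.mpr h2P) (Finset.mem_coe.mpr hA₀) (e.trans hρ.symm)
    exact h2H (Finset.Subset.antisymm h2sH (this ▸ hHA))
  exact ⟨φ L1, φ L2, hU, hV, fun h => h12 ((hiff _ h1P _ h2P).mp h),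
    fun h => h21 ((hiff _ h2P _ h1P).mp h), hUS, hVS⟩

theorem partner_of_leg {P : Finset (Finset ℕ)} {L1 L2 H : Finset ℕ} (hlegs : LegsAt P L1 L2 H)
    {F : Finset (Finset ℕ)} {S : Finset ℕ} {φ : Finset ℕ → Finset ℕ}
    (hφ : IsCopyMap P (insert S F) φ) (hSF : S ∉ F) (hleg : φ L1 = S ∨ φ L2 = S) :
    ∃ B, B ∈ F ∧ ¬ B ⊆ S ∧ ¬ S ⊆ B ∧ B ⊆ φ H ∧ B ≠ φ H ∧ S ⊆ φ H ∧ S ≠ φ H ∧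
      φ H ∈ F ∧ TopsFam P L1 L2 H F (φ H) := by
  obtain ⟨h1P, h2P, hHP, h12ne, h1H, h2H, h12, h21, h1sH, h2sH, hmin⟩ := hlegs
  obtain ⟨hinj, hmem, hiff⟩ := hφ
  have main : ∀ a b : Finset ℕ, a ∈ P → b ∈ P → a ≠ H → b ≠ H → ¬ a ⊆ b → ¬ b ⊆ a →
      a ⊆ H → b ⊆ H → (a = L1 ∨ a = L2) → φ a = S →
      ∃ B, B ∈ F ∧ ¬ B ⊆ S ∧ ¬ S ⊆ B ∧ B ⊆ φ H ∧ B ≠ φ H ∧ S ⊆ φ H ∧ S ≠ φ H ∧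
        φ H ∈ F ∧ TopsFam P L1 L2 H F (φ H) := by
    intro a b haP hbP haH hbH hab hba hasH hbsH ha12 haS
    have hHF : φ H ∈ F := by
      refine (Finset.mem_insert.mp (hmem _ hHP)).resolve_left fun e => ?_
      exact haH (hinj (Finset.mem_coe.mpr haP) (Finset.mem_coe.mpr hHP) (haS.trans e.symm))
    have hBF : φ b ∈ F := by
      refine (Finset.mem_insert.mp (hmem _ hbP)).resolve_left fun e => ?_
      have : b = a := hinj (Finset.mem_coe.mpr hbP) (Finset.mem_coe.mpr haP) (e.trans haS.symm)
      exact hba (this ▸ Finset.Subset.refl b)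
    refine ⟨φ b, hBF, fun h => hba ((hiff _ hbP _ haP).mp (haS ▸ h)),
      fun h => hab ((hiff _ haP _ hbP).mp (haS ▸ h)),
      (hiff _ hbP _ hHP).mpr hbsH,
      fun e => hbH (hinj (Finset.mem_coe.mpr hbP) (Finset.mem_coe.mpr hHP) e),
      haS ▸ (hiff _ haP _ hHP).mpr hasH,
      fun e => hSF (e ▸ hHF), hHF,
      φ, hinj, hiff, rfl, ?_⟩
    intro C hC c1 c2 c3
    refine (Finset.mem_insert.mp (hmem C hC)).resolve_left fun e => ?_
    have hCa : C = a := hinj (Finset.mem_coe.mpr hC) (Finset.mem_coe.mpr haP) (e.trans haS.symm)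
    rcases ha12 with rfl | rfl
    · exact c1 hCa
    · exact c2 hCa
  rcases hleg with h | h
  · exact main L1 L2 h1P h2P h1H h2H h12 h21 h1sH h2sH (Or.inl rfl) h
  · exact main L2 L1 h2P h1P h2H h1H h21 h12 h2sH h1sH (Or.inr rfl) h

theorem copy_leg {P : Finset (Finset ℕ)} {L1 L2 H : Finset ℕ} (hlegs : LegsAt P L1 L2 H)
    {F : Finset (Finset ℕ)} (hfree : ¬ ContainsInduced P F) {i : ℕ}
    (hiF : ({i} : Finset ℕ) ∉ F) {φ : Finset ℕ → Finset ℕ}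
    (hφ : IsCopyMap P (insert ({i} : Finset ℕ) F) φ) :
    φ L1 = {i} ∨ φ L2 = {i} := by
  obtain ⟨A₀, hA₀, hA₀eq⟩ := copy_uses hfree hiF hφ
  by_cases hA1 : A₀ = L1
  · exact Or.inl (hA1 ▸ hA₀eq)
  by_cases hA2 : A₀ = L2
  · exact Or.inr (hA2 ▸ hA₀eq)
  exfalso
  have hHA : H ⊆ A₀ := by
    by_cases hAH : A₀ = H
    · exact hAH ▸ Finset.Subset.refl H
    · exact hlegs.2.2.2.2.2.2.2.2.2.2 A₀ hA₀ hA1 hA2 hAH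
  obtain ⟨U, V, hU, hV, hUV, hVU, hUS, hVS⟩ := legs_below hlegs hφ hA₀ hA₀eq hHA
  rcases Finset.subset_singleton_iff.mp hUS with e | e
  · exact hUV (e ▸ Finset.empty_subset V)
  · exact hVU (by rw [e]; exact hVS)

theorem key {P : Finset (Finset ℕ)} {L1 L2 H : Finset ℕ} (hlegs : LegsAt P L1 L2 H)
    {n : ℕ} {F : Finset (Finset ℕ)} (hF : InducedSaturated n P F) {i : ℕ}
    (hi : i ∈ Finset.Icc 1 n) (hiF : ({i} : Finset ℕ) ∉ F) :
    ∀ (k : ℕ) (X M : Finset ℕ), n ≤ M.card + k → X ∈ F →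
      (∃ φ, IsCopyMap P (insert ({i} : Finset ℕ) F) φ ∧ φ H = X) →
      M ∈ F → M ⊆ X → M ≠ X → M ≠ ∅ → i ∉ M →
      ∃ X', X' ∈ F ∧ i ∈ X' ∧ X' \ {i} ∈ F ∧ X' \ {i} ≠ ∅ ∧
        ∃ φ, IsCopyMap P (insert ({i} : Finset ℕ) F) φ ∧ φ H = X' := by
  intro k
  induction k with
  | zero =>
    intro X M hcard hX _ _ hMX hMne _ _
    exfalso
    have h1 : M.card < X.card :=
      Finset.card_lt_card (Finset.ssubset_iff_subset_ne.mpr ⟨hMX, hMne⟩)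
    have h2 : X.card ≤ n := by
      have := Finset.card_le_card (hF.1 X hX)
      simpa [Nat.card_Icc] using this
    omega
  | succ k ih =>
    intro X M hcard hX hhip hM hMX hMne hMemp hiM
    obtain ⟨ψ, hψ, hψH⟩ := hhip
    obtain ⟨-, hTX⟩ := hip_tops hlegs hψ
    rw [hψH] at hTX
    have hiX : i ∈ X := by
      obtain ⟨B₀, -, -, -, -, -, hSW₀, -, -, -⟩ :=
        partner_of_leg hlegs hψ hiF (copy_leg hlegs hF.2.1 hiF hψ)
      exact hψH ▸ Finset.singleton_subset_iff.mp hSW₀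
    obtain ⟨m, hm⟩ := Finset.nonempty_iff_ne_empty.mpr hMemp
    have hmi : m ≠ i := fun e => hiM (e ▸ hm)
    set S : Finset ℕ := insert i M with hSdef
    have hSX : S ⊆ X := Finset.insert_subset hiX hMX
    have hSd : S \ {i} = M := by
      ext a
      simp only [hSdef, Finset.mem_sdiff, Finset.mem_insert, Finset.mem_singleton]
      constructor
      · rintro ⟨h | h, h2⟩
        · exact absurd h h2
        · exact h
      · intro ha
        exact ⟨Or.inr ha, fun e => hiM (e ▸ ha)⟩
    by_cases hSeqX : S = X
    · refine ⟨X, hX, hiX, ?_, ?_, ψ, hψ, hψH⟩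
      · rw [← hSeqX, hSd]; exact hM
      · rw [← hSeqX, hSd]; exact hMemp
    by_cases hSF : S ∈ F
    · -- S itself is a smaller tight hip
      have hiS : i ∈ S := Finset.mem_insert_self i M
      obtain ⟨χ, hχ, hχH⟩ := chi hlegs hTX
        (G := insert ({i} : Finset ℕ) F) (fun Y hY => Finset.mem_insert_of_mem hY)
        (Finset.mem_insert_self _ _) (Finset.mem_insert_of_mem hM)
        (Finset.mem_insert_of_mem hSF)
        (fun h => hiM (Finset.singleton_subset_iff.mp h))
        (fun h => hmi (Finset.mem_singleton.mp (h hm)))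
        (Finset.singleton_subset_iff.mpr hiS) (Finset.subset_insert i M)
        (fun e => hmi (Finset.mem_singleton.mp (e ▸ (Finset.subset_insert i M) hm)))
        (fun e => hiM (e ▸ hiS)) hSX
      refine ⟨S, hSF, hiS, ?_, ?_, χ, hχ, hχH⟩
      · rw [hSd]; exact hM
      · rw [hSd]; exact hMemp
    · -- S ∉ F : saturation
      have hSsub : S ⊆ Finset.Icc 1 n :=
        Finset.insert_subset hi (hF.1 M hM)
      obtain ⟨ρ, hρ⟩ := hF.2.2 S hSsub hSF
      obtain ⟨A₀, hA₀, hA₀S⟩ := copy_uses hF.2.1 hSF hρ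
      by_cases hAleg : A₀ = L1 ∨ A₀ = L2
      · -- leg case
        have hleg : ρ L1 = S ∨ ρ L2 = S := by
          rcases hAleg with rfl | rfl
          · exact Or.inl hA₀S
          · exact Or.inr hA₀S
        obtain ⟨B, hBF, hBS, hSB, hBW, hBneW, hSW, hSneW, hWF, hTW⟩ :=
          partner_of_leg hlegs hρ hSF hleg
        have hMW : M ⊆ ρ H := (Finset.subset_insert i M).trans hSW
        have hMneW : M ≠ ρ H := fun e =>
          hiM (by rw [e]; exact hSW (Finset.mem_insert_self i M))
        have hBne : ¬ B ⊆ M := fun h => hBS (h.trans (Finset.subset_insert i M))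
        have hMB : M ⊆ B := by
          rcases chain_below hlegs hF.2.1 hTW hWF hM hBF hMW hMneW hBW hBneW with h | h
          · exact h
          · exact absurd h hBne
        have hiB : i ∉ B := fun hib => hSB (Finset.insert_subset hib hMB)
        have hBemp : B ≠ ∅ := fun e => hBS (e ▸ Finset.empty_subset S)
        obtain ⟨b, hb⟩ := Finset.nonempty_iff_ne_empty.mpr hBemp
        have hbi : b ≠ i := fun e => hiB (e ▸ hb)
        obtain ⟨χ, hχ, hχH⟩ := chi hlegs hTW
          (G := insert ({i} : Finset ℕ) F) (fun Y hY => Finset.mem_insert_of_mem hY)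
          (Finset.mem_insert_self _ _) (Finset.mem_insert_of_mem hBF)
          (Finset.mem_insert_of_mem hWF)
          (fun h => hiB (Finset.singleton_subset_iff.mp h))
          (fun h => hbi (Finset.mem_singleton.mp (h hb)))
          (Finset.singleton_subset_iff.mpr (hSW (Finset.mem_insert_self i M))) hBW
          (fun e => hbi (Finset.mem_singleton.mp (e ▸ hBW hb)))
          hBneW (Finset.Subset.refl _)
        have hcard' : n ≤ B.card + k := by
          have : M.card < B.card :=
            Finset.card_lt_card (Finset.ssubset_iff_subset_ne.mpr
              ⟨hMB, fun e => hBne (e ▸ Finset.Subset.refl M)⟩)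
          omega
        exact ih (ρ H) B hcard' hWF ⟨χ, hχ, hχH⟩ hBF hBW hBneW hBemp hiB
      · -- hip/top case: contradiction via chain below X
        exfalso
        push_neg at hAleg
        have hHA : H ⊆ A₀ := by
          by_cases hAH : A₀ = H
          · exact hAH ▸ Finset.Subset.refl H
          · exact hlegs.2.2.2.2.2.2.2.2.2.2 A₀ hA₀ hAleg.1 hAleg.2 hAH
        obtain ⟨U, V, hU, hV, hUV, hVU, hUS, hVS⟩ := legs_below hlegs hρ hA₀ hA₀S hHA
        have hUX : U ⊆ X := hUS.trans hSX
        have hVX : V ⊆ X := hVS.trans hSX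
        have hUne : U ≠ X := fun e =>
          hSeqX (Finset.Subset.antisymm hSX (e ▸ hUS))
        have hVne : V ≠ X := fun e =>
          hSeqX (Finset.Subset.antisymm hSX (e ▸ hVS))
        rcases chain_below hlegs hF.2.1 hTX hX hU hV hUX hUne hVX hVne with h | h
        · exact hUV h
        · exact hVU h

theorem tight_exists {P : Finset (Finset ℕ)} {L1 L2 H : Finset ℕ} (hlegs : LegsAt P L1 L2 H)
    {n : ℕ} {F : Finset (Finset ℕ)} (hF : InducedSaturated n P F) {i : ℕ}
    (hi : i ∈ Finset.Icc 1 n) (hiF : ({i} : Finset ℕ) ∉ F) :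
    ∃ X, X ∈ F ∧ i ∈ X ∧ X \ {i} ∈ F ∧ X \ {i} ≠ ∅ ∧
      ∃ φ, IsCopyMap P (insert ({i} : Finset ℕ) F) φ ∧ φ H = X := by
  have hsub : ({i} : Finset ℕ) ⊆ Finset.Icc 1 n := Finset.singleton_subset_iff.mpr hi
  obtain ⟨ρ, hρ⟩ := hF.2.2 {i} hsub hiF
  obtain ⟨B, hBF, hBS, hSB, hBW, hBneW, hSW, hSneW, hWF, hTW⟩ :=
    partner_of_leg hlegs hρ hiF (copy_leg hlegs hF.2.1 hiF hρ)
  have hiB : i ∉ B := fun h => hSB (Finset.singleton_subset_iff.mpr h)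
  have hBemp : B ≠ ∅ := fun e => hBS (e ▸ Finset.empty_subset _)
  exact key hlegs hF hi hiF n (ρ H) B (Nat.le_add_left n B.card) hWF ⟨ρ, hρ, rfl⟩
    hBF hBW hBneW hBemp hiB


/-- If `P` is a poset with legs `L1, L2` and hip `H`, and `F ⊆ 2^[n]` is induced
`P`-saturated, then there is an injective `f : [n] → F \ {∅}` with `f i = {i}` whenever
`{i} ∈ F`, and otherwise `f i` is the hip of some induced copy of `P` in `F ∪ {{i}}`. -/
theorem legs_injection (P : Finset (Finset ℕ)) (L1 L2 H : Finset ℕ)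
    (hlegs : LegsAt P L1 L2 H) (n : ℕ) (F : Finset (Finset ℕ))
    (hF : InducedSaturated n P F) :
    ∃ f : ℕ → Finset ℕ, Set.InjOn f ↑(Finset.Icc 1 n) ∧
      ∀ i ∈ Finset.Icc 1 n, f i ∈ F ∧ f i ≠ ∅ ∧
        (({i} : Finset ℕ) ∈ F → f i = {i}) ∧
        (({i} : Finset ℕ) ∉ F →
          ∃ φ, IsCopyMap P (insert {i} F) φ ∧ f i = φ H) := by
  classical
  have hchoice : ∀ i : ℕ, ∃ X, i ∈ Finset.Icc 1 n → ({i} : Finset ℕ) ∉ F →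
      X ∈ F ∧ i ∈ X ∧ X \ {i} ∈ F ∧ X \ {i} ≠ ∅ ∧
        ∃ φ, IsCopyMap P (insert ({i} : Finset ℕ) F) φ ∧ φ H = X := by
    intro i
    by_cases h1 : i ∈ Finset.Icc 1 n
    · by_cases h2 : ({i} : Finset ℕ) ∈ F
      · exact ⟨∅, fun _ h => absurd h2 h⟩
      · obtain ⟨X, hX⟩ := tight_exists hlegs hF h1 h2
        exact ⟨X, fun _ _ => hX⟩
    · exact ⟨∅, fun h => absurd h h1⟩
  choose g hg using hchoice
  refine ⟨fun i => if ({i} : Finset ℕ) ∈ F then {i} else g i, ?_, ?_⟩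
  · -- injectivity
    intro a ha b hb hab
    rw [Finset.mem_coe] at ha hb
    simp only at hab
    by_cases h2a : ({a} : Finset ℕ) ∈ F <;> by_cases h2b : ({b} : Finset ℕ) ∈ F
    · rw [if_pos h2a, if_pos h2b] at hab
      exact Finset.singleton_inj.mp hab
    · rw [if_pos h2a, if_neg h2b] at hab
      have hgb := hg b hb h2b
      have : b = a := Finset.mem_singleton.mp (hab ▸ hgb.2.1)
      exact this.symm
    · rw [if_neg h2a, if_pos h2b] at hab
      have hga := hg a ha h2a
      have : a = b := Finset.mem_singleton.mp (hab ▸ hga.2.1)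
      exact this
    · rw [if_neg h2a, if_neg h2b] at hab
      by_contra hne
      have hga := hg a ha h2a
      have hgb := hg b hb h2b
      rw [hab] at hga
      -- now both tight hips equal g b =: X
      obtain ⟨hXF, haX, hYF, hYne, φ, hφ, hφH⟩ := hga
      obtain ⟨-, hbX, hZF, hZne, -⟩ := hgb
      have hTX : TopsFam P L1 L2 H F (g b) := by
        have := (hip_tops hlegs hφ).2
        rwa [hφH] at this
      have hYX : g b \ {a} ⊆ g b := Finset.sdiff_subset
      have hZX : g b \ {b} ⊆ g b := Finset.sdiff_subset
      have hYneX : g b \ {a} ≠ g b := fun e => by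
        have : a ∉ g b \ {a} := by simp
        rw [e] at this
        exact this haX
      have hZneX : g b \ {b} ≠ g b := fun e => by
        have : b ∉ g b \ {b} := by simp
        rw [e] at this
        exact this hbX
      have hbY : b ∈ g b \ {a} := Finset.mem_sdiff.mpr ⟨hbX, by simpa using fun e => hne e.symm⟩
      have haZ : a ∈ g b \ {b} := Finset.mem_sdiff.mpr ⟨haX, by simpa using hne⟩
      rcases chain_below hlegs hF.2.1 hTX hXF hYF hZF hYX hYneX hZX hZneX with h | h
      · have := h hbY
        simp at this
      · have := h haZ
        simp at this
  · -- properties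
    intro i hi
    by_cases h2 : ({i} : Finset ℕ) ∈ F
    · simp only [if_pos h2]
      exact ⟨h2, Finset.singleton_ne_empty i, fun _ => trivial, fun h => absurd h2 h⟩
    · simp only [if_neg h2]
      obtain ⟨hXF, hiX, hYF, hYne, φ, hφ, hφH⟩ := hg i hi h2
      exact ⟨hXF, Finset.ne_empty_of_mem hiX, fun h => absurd h h2,
        fun _ => ⟨φ, hφ, hφH.symm⟩⟩
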